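/- Let h₀ generate a linear T-periodic flow Φ^t on a Hilbert phase space, with Φ^t an isometry for every t. Let G be analytic on B(R) with analytic vector field. Define Z(ζ) = (1/T)∫₀^T G(Φ^t(ζ)) dt and χ(ζ) = (1/T)∫₀^T t·[Z(Φ^t(ζ)) − G(Φ^t(ζ))] dt. Then χ solves the homological equation {χ, h₀} + G = Z, Z is in normal form (i.e. {h₀, Z} = 0), and the vector fields satisfy sup_{B(R)} ‖X_Z‖ ≤ sup_{B(R)} ‖X_G‖ and sup_{B(R)} ‖X_χ‖ ≤ 2T · sup_{B(R)} ‖X_G‖. -/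

import Mathlib

open MeasureTheory

/-- The time-average `Z(ζ) = (1/T) ∫₀^T G(Φ^t ζ) dt`. -/
noncomputable def avgZ {E : Type*} [NormedAddCommGroup E] [InnerProductSpace ℝ E]
    (T : ℝ) (Φ : ℝ → E ≃ₗᵢ[ℝ] E) (G : E → ℝ) : E → ℝ :=
  fun ζ => (1 / T) * ∫ t in (0 : ℝ)..T, G (Φ t ζ)

/-- The solution of the homological equation,
`χ(ζ) = (1/T) ∫₀^T t·[Z(Φ^t ζ) − G(Φ^t ζ)] dt`. -/
noncomputable def homChi {E : Type*} [NormedAddCommGroup E] [InnerProductSpace ℝ E]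
    (T : ℝ) (Φ : ℝ → E ≃ₗᵢ[ℝ] E) (G : E → ℝ) : E → ℝ :=
  fun ζ => (1 / T) * ∫ t in (0 : ℝ)..T, t * (avgZ T Φ G (Φ t ζ) - G (Φ t ζ))

set_option maxHeartbeats 1000000 in
/-- Homological equation lemma: if `h₀` generates the linear `T`-periodic isometric
flow `Φ`, and `G` is analytic on `B(R)` with analytic Hamiltonian vector field
`X_G = J ∘ ∇G` bounded by `CG`, then `χ` solves `{χ,h₀} + G = Z`, the average `Z`
is in normal form (`Z ∘ Φ^t = Z`, i.e. `{h₀,Z} = 0`), and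
`‖X_Z‖ ≤ CG`, `‖X_χ‖ ≤ 2T·CG` on `B(R)`. -/
theorem stmt_5 {E : Type*} [NormedAddCommGroup E] [InnerProductSpace ℝ E] [CompleteSpace E]
    (T R CG : ℝ) (hT : 0 < T) (hR : 0 < R)
    (Φ : ℝ → E ≃ₗᵢ[ℝ] E)
    (hΦ0 : Φ 0 = LinearIsometryEquiv.refl ℝ E)
    (hgroup : ∀ s t : ℝ, ∀ ζ : E, Φ (s + t) ζ = Φ s (Φ t ζ))
    (hper : ∀ t : ℝ, ∀ ζ : E, Φ (t + T) ζ = Φ t ζ)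
    (hcont : Continuous fun p : ℝ × E => Φ p.1 p.2)
    (J : E ≃ₗᵢ[ℝ] E)
    (hJΦ : ∀ t : ℝ, ∀ v : E, Φ t (J v) = J (Φ t v))
    (G : E → ℝ)
    (hG : AnalyticOnNhd ℝ G (Metric.ball 0 R))
    (hXG : AnalyticOnNhd ℝ (fun ζ => J (gradient G ζ)) (Metric.ball 0 R))
    (hGb : ∀ ζ ∈ Metric.ball (0 : E) R, ‖J (gradient G ζ)‖ ≤ CG) :
    (∀ ζ ∈ Metric.ball (0 : E) R,
        deriv (fun s : ℝ => homChi T Φ G (Φ s ζ)) 0 + G ζ = avgZ T Φ G ζ) ∧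
    (∀ t : ℝ, ∀ ζ : E, avgZ T Φ G (Φ t ζ) = avgZ T Φ G ζ) ∧
    (∀ ζ ∈ Metric.ball (0 : E) R, ‖J (gradient (avgZ T Φ G) ζ)‖ ≤ CG) ∧
    (∀ ζ ∈ Metric.ball (0 : E) R, ‖J (gradient (homChi T Φ G) ζ)‖ ≤ 2 * T * CG) := by
  have hTne : (T:ℝ) ≠ 0 := ne_of_gt hT
  haveI : SecondCountableTopologyEither ℝ (StrongDual ℝ E) :=
    secondCountableTopologyEither_of_left ℝ _
  haveI : SecondCountableTopologyEither ℝ (E →L[ℝ] ℝ) :=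
    secondCountableTopologyEither_of_left ℝ _
  set B := Metric.ball (0:E) R with hBdef
  -- basic flow facts
  have hmem : ∀ (t : ℝ) (ζ : E), ζ ∈ B → Φ t ζ ∈ B := by
    intro t ζ hζ
    rw [hBdef, mem_ball_zero_iff] at *
    simpa [(Φ t).norm_map] using hζ
  have hflow : ∀ x : E, Continuous fun t : ℝ => Φ t x :=
    fun x => hcont.comp (continuous_id.prodMk continuous_const)
  have hinv1 : ∀ (t : ℝ) (v : E), Φ t (Φ (-t) v) = v := by
    intro t v
    rw [← hgroup, add_neg_cancel, hΦ0]
    rfl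
  have hΦT : ∀ ζ : E, Φ T ζ = ζ := by
    intro ζ
    have := hper 0 ζ
    rw [zero_add, hΦ0] at this
    simpa using this
  have hadj : ∀ (t : ℝ) (w v : E), (inner ℝ w (Φ t v) : ℝ) = inner ℝ (Φ (-t) w) v := by
    intro t w v
    conv_lhs => rw [← hinv1 t w]
    exact (Φ t).inner_map_map _ _
  have hCG0 : 0 ≤ CG :=
    le_trans (norm_nonneg _) (hGb 0 (Metric.mem_ball_self hR))
  -- continuity of t ↦ G (Φ t x)
  have hGcc : ∀ x ∈ B, Continuous fun t : ℝ => G (Φ t x) := by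
    intro x hx
    rw [continuous_iff_continuousAt]
    intro t
    exact ContinuousAt.comp (f := fun s : ℝ => Φ s x) ((hG _ (hmem t x hx)).continuousAt)
      (hflow x).continuousAt
  -- the vector field path
  set wG : ℝ → E → E := fun t x => Φ (-t) (gradient G (Φ t x)) with hwGdef
  have hgradb : ∀ η ∈ B, ‖gradient G η‖ ≤ CG := by
    intro η hη
    rw [← J.norm_map]
    exact hGb η hη
  have hwb : ∀ (t : ℝ), ∀ x ∈ B, ‖wG t x‖ ≤ CG := by
    intro t x hx
    rw [hwGdef]
    simp only [(Φ (-t)).norm_map]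
    exact hgradb _ (hmem t x hx)
  have hgradc : ∀ x ∈ B, ContinuousAt (gradient G) x := by
    intro x hx
    exact ((InnerProductSpace.toDual ℝ E).symm.continuous.continuousAt).comp
      ((hG.fderiv x hx).continuousAt)
  have hwc : ∀ x ∈ B, Continuous fun t : ℝ => wG t x := by
    intro x hx
    rw [continuous_iff_continuousAt]
    intro t
    have h1 : ContinuousAt (fun t : ℝ => gradient G (Φ t x)) t :=
      ContinuousAt.comp (f := fun s : ℝ => Φ s x) (hgradc _ (hmem t x hx))
        (hflow x).continuousAt
    exact hcont.continuousAt.comp (ContinuousAt.prodMk (continuous_neg.continuousAt) h1)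
  -- derivative of x ↦ G (Φ t x)
  have hGd : ∀ η ∈ B, HasFDerivAt G ((InnerProductSpace.toDual ℝ E) (gradient G η)) η :=
    fun η hη => ((hG η hη).differentiableAt.hasGradientAt).hasFDerivAt
  have hcompG : ∀ (t : ℝ), ∀ x ∈ B,
      HasFDerivAt (fun y => G (Φ t y)) ((InnerProductSpace.toDual ℝ E) (wG t x)) x := by
    intro t x hx
    have h2 : HasFDerivAt (fun y : E => Φ t y)
        ((Φ t).toContinuousLinearEquiv : E →L[ℝ] E) x :=
      (Φ t).toContinuousLinearEquiv.hasFDerivAt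
    have h3 := (hGd (Φ t x) (hmem t x hx)).comp x h2
    have h4 : ((InnerProductSpace.toDual ℝ E) (gradient G (Φ t x))).comp
        ((Φ t).toContinuousLinearEquiv : E →L[ℝ] E)
        = (InnerProductSpace.toDual ℝ E) (wG t x) := by
      ext v
      simp only [ContinuousLinearMap.coe_comp', Function.comp_apply,
        InnerProductSpace.toDual_apply_apply, LinearIsometryEquiv.coe_toContinuousLinearEquiv]
      exact hadj t _ v
    rw [h4] at h3
    exact h3
  -- Part 2: normal form
  have hZper : ∀ (s : ℝ) (ζ : E), avgZ T Φ G (Φ s ζ) = avgZ T Φ G ζ := by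
    intro s ζ
    have hp : Function.Periodic (fun u : ℝ => G (Φ u ζ)) T := fun u => by
      show G (Φ (u + T) ζ) = G (Φ u ζ); rw [hper]
    unfold avgZ
    congr 1
    calc ∫ t in (0:ℝ)..T, G (Φ t (Φ s ζ))
        = ∫ t in (0:ℝ)..T, G (Φ (t + s) ζ) := by simp_rw [← hgroup]
      _ = ∫ u in (0+s)..(T+s), G (Φ u ζ) :=
          intervalIntegral.integral_comp_add_right (fun u => G (Φ u ζ)) s
      _ = ∫ u in s..(s+T), G (Φ u ζ) := by rw [zero_add, add_comm T s]
      _ = ∫ u in (0:ℝ)..(0+T), G (Φ u ζ) := hp.intervalIntegral_add_eq s 0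
      _ = ∫ u in (0:ℝ)..T, G (Φ u ζ) := by rw [zero_add]
  -- splitting identity for homChi on B
  have hsplit : ∀ x ∈ B, homChi T Φ G x
      = (T/2) * avgZ T Φ G x - (1/T) * ∫ t in (0:ℝ)..T, t * G (Φ t x) := by
    intro x hx
    unfold homChi
    have h1 : ∀ t : ℝ, t * (avgZ T Φ G (Φ t x) - G (Φ t x))
        = t * avgZ T Φ G x - t * G (Φ t x) := by
      intro t; rw [hZper]; ring
    simp_rw [h1]
    have i1 : IntervalIntegrable (fun t : ℝ => t * avgZ T Φ G x) volume 0 T :=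
      (continuous_id.mul continuous_const).intervalIntegrable _ _
    have i2 : IntervalIntegrable (fun t : ℝ => t * G (Φ t x)) volume 0 T :=
      (continuous_id.mul (hGcc x hx)).intervalIntegrable _ _
    rw [intervalIntegral.integral_sub i1 i2,
      intervalIntegral.integral_mul_const, integral_id]
    field_simp
    ring
  -- fderiv of Z
  have hZD : ∀ ζ ∈ B, HasFDerivAt (avgZ T Φ G)
      ((1/T) • ∫ t in (0:ℝ)..T, (InnerProductSpace.toDual ℝ E) (wG t ζ)) ζ := by
    intro ζ hζ
    have hζ' : ‖ζ‖ < R := by rwa [hBdef, mem_ball_zero_iff] at hζ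
    have hε : 0 < R - ‖ζ‖ := by linarith
    have hsub : Metric.ball ζ (R - ‖ζ‖) ⊆ B := by
      intro x hx
      rw [Metric.mem_ball, dist_eq_norm] at hx
      rw [hBdef, mem_ball_zero_iff]
      have := norm_add_le (x - ζ) ζ
      simp only [sub_add_cancel] at this
      linarith
    have key : HasFDerivAt (fun x => ∫ t in (0:ℝ)..T, G (Φ t x))
        (∫ t in (0:ℝ)..T, (InnerProductSpace.toDual ℝ E) (wG t ζ)) ζ := by
      apply hasFDerivAt_integral_of_dominated_of_fderiv_le''
        (F' := fun x t => (InnerProductSpace.toDual ℝ E) (wG t x))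
        (bound := fun _ => CG) (Metric.ball_mem_nhds ζ hε)
      · filter_upwards [Metric.isOpen_ball.mem_nhds hζ] with x hx
        exact (hGcc x hx).aestronglyMeasurable
      · exact (hGcc ζ hζ).intervalIntegrable _ _
      · exact (((InnerProductSpace.toDual ℝ E).continuous.comp (hwc ζ hζ))).aestronglyMeasurable
      · refine Filter.Eventually.of_forall (fun t => fun x hx => ?_)
        rw [LinearIsometryEquiv.norm_map]
        exact hwb t x (hsub hx)
      · exact intervalIntegrable_const
      · exact Filter.Eventually.of_forall (fun t => fun x hx => hcompG t x (hsub hx))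
    exact key.const_mul (1/T)
  -- fderiv of ψ
  have hψD : ∀ ζ ∈ B, HasFDerivAt (fun x => (1/T) * ∫ t in (0:ℝ)..T, t * G (Φ t x))
      ((1/T) • ∫ t in (0:ℝ)..T, t • (InnerProductSpace.toDual ℝ E) (wG t ζ)) ζ := by
    intro ζ hζ
    have hζ' : ‖ζ‖ < R := by rwa [hBdef, mem_ball_zero_iff] at hζ
    have hε : 0 < R - ‖ζ‖ := by linarith
    have hsub : Metric.ball ζ (R - ‖ζ‖) ⊆ B := by
      intro x hx
      rw [Metric.mem_ball, dist_eq_norm] at hx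
      rw [hBdef, mem_ball_zero_iff]
      have := norm_add_le (x - ζ) ζ
      simp only [sub_add_cancel] at this
      linarith
    have key : HasFDerivAt (fun x => ∫ t in (0:ℝ)..T, t * G (Φ t x))
        (∫ t in (0:ℝ)..T, t • (InnerProductSpace.toDual ℝ E) (wG t ζ)) ζ := by
      apply hasFDerivAt_integral_of_dominated_of_fderiv_le''
        (F' := fun x t => t • (InnerProductSpace.toDual ℝ E) (wG t x))
        (bound := fun t => |t| * CG) (Metric.ball_mem_nhds ζ hε)
      · filter_upwards [Metric.isOpen_ball.mem_nhds hζ] with x hx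
        exact (continuous_id.mul (hGcc x hx)).aestronglyMeasurable
      · exact (continuous_id.mul (hGcc ζ hζ)).intervalIntegrable _ _
      · exact (continuous_id.smul
          ((InnerProductSpace.toDual ℝ E).continuous.comp (hwc ζ hζ))).aestronglyMeasurable
      · refine Filter.Eventually.of_forall (fun t => fun x hx => ?_)
        show ‖t • (InnerProductSpace.toDual ℝ E) (wG t x)‖ ≤ |t| * CG
        rw [norm_smul, Real.norm_eq_abs, LinearIsometryEquiv.norm_map]
        exact mul_le_mul_of_nonneg_left (hwb t x (hsub hx)) (abs_nonneg t)
      · exact (continuous_abs.mul continuous_const).intervalIntegrable _ _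
      · exact Filter.Eventually.of_forall
          (fun t => fun x hx => (hcompG t x (hsub hx)).const_mul t)
    exact key.const_mul (1/T)
  -- fderiv of χ
  have hχD : ∀ ζ ∈ B, HasFDerivAt (homChi T Φ G)
      ((T/2) • ((1/T) • ∫ t in (0:ℝ)..T, (InnerProductSpace.toDual ℝ E) (wG t ζ))
        - (1/T) • ∫ t in (0:ℝ)..T, t • (InnerProductSpace.toDual ℝ E) (wG t ζ)) ζ := by
    intro ζ hζ
    have hrhs := ((hZD ζ hζ).const_mul (T/2)).sub (hψD ζ hζ)
    apply hrhs.congr_of_eventuallyEq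
    filter_upwards [Metric.isOpen_ball.mem_nhds hζ] with x hx
    exact hsplit x hx
  -- norm bounds on the integrals
  have hAbound : ∀ ζ ∈ B,
      ‖∫ t in (0:ℝ)..T, (InnerProductSpace.toDual ℝ E) (wG t ζ)‖ ≤ CG * T := by
    intro ζ hζ
    have h := intervalIntegral.norm_integral_le_of_norm_le_const
      (a := 0) (b := T) (C := CG) (f := fun t => (InnerProductSpace.toDual ℝ E) (wG t ζ))
      (fun t _ => by rw [LinearIsometryEquiv.norm_map]; exact hwb t ζ hζ)
    rwa [sub_zero, abs_of_pos hT] at h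
  have hBbound : ∀ ζ ∈ B,
      ‖∫ t in (0:ℝ)..T, t • (InnerProductSpace.toDual ℝ E) (wG t ζ)‖ ≤ T * CG * T := by
    intro ζ hζ
    have h := intervalIntegral.norm_integral_le_of_norm_le_const
      (a := 0) (b := T) (C := T * CG)
      (f := fun t => t • (InnerProductSpace.toDual ℝ E) (wG t ζ))
      (fun t ht => by
        rw [Set.uIoc_of_le hT.le] at ht
        rw [norm_smul, Real.norm_eq_abs, LinearIsometryEquiv.norm_map,
          abs_of_pos ht.1]
        exact mul_le_mul ht.2 (hwb t ζ hζ) (norm_nonneg _) hT.le)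
    rwa [sub_zero, abs_of_pos hT] at h
  refine ⟨?_, fun t ζ => hZper t ζ, ?_, ?_⟩
  · -- Part 1: homological equation
    intro ζ hζ
    set Zc := avgZ T Φ G ζ with hZcdef
    set g : ℝ → ℝ := fun u => G (Φ u ζ) with hgdef
    have gc : Continuous g := hGcc ζ hζ
    have hp : Function.Periodic g T := fun u => by simp only [hgdef]; rw [hper]
    set K : ℝ → ℝ := fun x => ∫ u in (0:ℝ)..x, u * g u with hKdef
    have hKd : ∀ x : ℝ, HasDerivAt K (x * g x) x :=
      fun x => ((continuous_id.mul gc).integral_hasStrictDerivAt 0 x).hasDerivAt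
    have hIg : ∫ u in (0:ℝ)..T, g u = T * Zc := by
      rw [hZcdef]
      unfold avgZ
      field_simp
      rfl
    have hψs : ∀ s : ℝ, homChi T Φ G (Φ s ζ)
        = (T/2) * Zc - (1/T) * (K (T + s) - K s - s * (T * Zc)) := by
      intro s
      rw [hsplit _ (hmem s ζ hζ), hZper]
      have e2 : ∫ t in (0:ℝ)..T, t * G (Φ t (Φ s ζ))
          = ∫ t in (0:ℝ)..T, (fun u => (u - s) * g u) (t + s) := by
        apply intervalIntegral.integral_congr
        intro t _
        simp only [hgdef, ← hgroup]
        ring_nf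
      have e3 : ∫ t in (0:ℝ)..T, (fun u => (u - s) * g u) (t + s)
          = ∫ u in s..(T+s), (u - s) * g u := by
        rw [intervalIntegral.integral_comp_add_right (fun u => (u - s) * g u) s, zero_add]
      have e4 : ∫ u in s..(T+s), (u - s) * g u
          = (∫ u in s..(T+s), u * g u) - s * ∫ u in s..(T+s), g u := by
        have : ∀ u : ℝ, (u - s) * g u = u * g u - s * g u := fun u => by ring
        simp_rw [this]
        have i1 : IntervalIntegrable (fun u : ℝ => u * g u) volume s (T+s) :=
          (continuous_id.mul gc).intervalIntegrable _ _
        have i2 : IntervalIntegrable (fun u : ℝ => s * g u) volume s (T+s) :=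
          (continuous_const.mul gc).intervalIntegrable _ _
        rw [intervalIntegral.integral_sub i1 i2, intervalIntegral.integral_const_mul]
      have e5 : ∫ u in s..(T+s), u * g u = K (T + s) - K s := by
        rw [hKdef]
        have i1 : IntervalIntegrable (fun u : ℝ => u * g u) volume 0 (T+s) :=
          (continuous_id.mul gc).intervalIntegrable _ _
        have i2 : IntervalIntegrable (fun u : ℝ => u * g u) volume 0 s :=
          (continuous_id.mul gc).intervalIntegrable _ _
        exact (intervalIntegral.integral_interval_sub_left i1 i2).symm
      have e6 : ∫ u in s..(T+s), g u = T * Zc := by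
        rw [add_comm T s, hp.intervalIntegral_add_eq s 0, zero_add, hIg]
      rw [e2, e3, e4, e5, e6]
    have hφ : (fun s : ℝ => homChi T Φ G (Φ s ζ))
        = fun s : ℝ => (T/2) * Zc - (1/T) * (K (T + s) - K s - s * (T * Zc)) :=
      funext hψs
    rw [hφ]
    have d1 : HasDerivAt (fun s : ℝ => K (T + s)) ((T + 0) * g (T + 0)) 0 :=
      HasDerivAt.comp_const_add T 0 (hKd (T + 0))
    have d2 : HasDerivAt K (0 * g 0) 0 := hKd 0
    have d3 : HasDerivAt (fun s : ℝ => s * (T * Zc)) (1 * (T * Zc)) 0 :=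
      (hasDerivAt_id 0).mul_const (T * Zc)
    have d : HasDerivAt
        (fun s : ℝ => (T/2) * Zc - (1/T) * (K (T + s) - K s - s * (T * Zc)))
        (0 - (1/T) * ((T + 0) * g (T + 0) - 0 * g 0 - 1 * (T * Zc))) 0 :=
      (hasDerivAt_const 0 ((T/2) * Zc)).sub
        (HasDerivAt.const_mul (1/T) ((d1.sub d2).sub d3))
    rw [d.deriv]
    have hgT : g (T + 0) = G ζ := by
      simp only [hgdef, add_zero, hΦT]
    rw [hgT]
    field_simp
    ring
  · -- Part 3
    intro ζ hζ
    have hdf := (hZD ζ hζ).fderiv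
    rw [J.norm_map,
      show gradient (avgZ T Φ G) ζ
        = (InnerProductSpace.toDual ℝ E).symm (fderiv ℝ (avgZ T Φ G) ζ) from rfl,
      LinearIsometryEquiv.norm_map, hdf, norm_smul, Real.norm_eq_abs,
      abs_of_pos (by positivity : (0:ℝ) < 1/T)]
    calc (1/T) * ‖∫ t in (0:ℝ)..T, (InnerProductSpace.toDual ℝ E) (wG t ζ)‖
        ≤ (1/T) * (CG * T) := by
          apply mul_le_mul_of_nonneg_left (hAbound ζ hζ) (by positivity)
      _ = CG := by field_simp
  · -- Part 4
    intro ζ hζ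
    have hdf := (hχD ζ hζ).fderiv
    rw [J.norm_map,
      show gradient (homChi T Φ G) ζ
        = (InnerProductSpace.toDual ℝ E).symm (fderiv ℝ (homChi T Φ G) ζ) from rfl,
      LinearIsometryEquiv.norm_map, hdf]
    have h1 : ‖(T/2) • ((1/T) • ∫ t in (0:ℝ)..T, (InnerProductSpace.toDual ℝ E) (wG t ζ))‖
        ≤ (T/2) * ((1/T) * (CG * T)) := by
      rw [norm_smul, norm_smul, Real.norm_eq_abs, Real.norm_eq_abs,
        abs_of_pos (by positivity : (0:ℝ) < T/2), abs_of_pos (by positivity : (0:ℝ) < 1/T)]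
      exact mul_le_mul_of_nonneg_left
        (mul_le_mul_of_nonneg_left (hAbound ζ hζ) (by positivity)) (by positivity)
    have h2 : ‖(1/T) • ∫ t in (0:ℝ)..T, t • (InnerProductSpace.toDual ℝ E) (wG t ζ)‖
        ≤ (1/T) * (T * CG * T) := by
      rw [norm_smul, Real.norm_eq_abs, abs_of_pos (by positivity : (0:ℝ) < 1/T)]
      exact mul_le_mul_of_nonneg_left (hBbound ζ hζ) (by positivity)
    calc ‖(T/2) • ((1/T) • ∫ t in (0:ℝ)..T, (InnerProductSpace.toDual ℝ E) (wG t ζ))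
          - (1/T) • ∫ t in (0:ℝ)..T, t • (InnerProductSpace.toDual ℝ E) (wG t ζ)‖
        ≤ (T/2) * ((1/T) * (CG * T)) + (1/T) * (T * CG * T) :=
          le_trans (norm_sub_le _ _) (add_le_add h1 h2)
      _ = (3/2) * (T * CG) := by field_simp; ring
      _ ≤ 2 * T * CG := by nlinarith [mul_nonneg hT.le hCG0]
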